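/- Let ρ and σ be d×d density matrices with ‖ρ − σ‖₁ ≤ κ for some κ with 0 < κ ≤ 1/e. Let G be a CPTNI map from d×d to d'×d' complex matrices and Z a pinching channel on d'×d' complex matrices, and let f(ρ) = H(Z(G(ρ))) − H(G(ρ)). Then |f(ρ) − f(σ)| ≤ 2κ·log(d'/κ). -/

import Mathlib

open scoped BigOperators ComplexOrder Matrix

/-- The trace norm `‖A‖₁ = Tr √(AᴴA)` of a square complex matrix. -/
noncomputable def traceNorm {d : ℕ} (A : Matrix (Fin d) (Fin d) ℂ) : ℝ :=
  ((Matrix.posSemidef_conjTranspose_mul_self A).1.eigenvectorUnitary.1 *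
    Matrix.diagonal (((↑) : ℝ → ℂ) ∘ Real.sqrt ∘ (Matrix.posSemidef_conjTranspose_mul_self A).1.eigenvalues) *
    (star (Matrix.posSemidef_conjTranspose_mul_self A).1.eigenvectorUnitary :
      Matrix (Fin d) (Fin d) ℂ)).trace.re

/-- The von Neumann entropy `H(σ) = −Σ λ_i log λ_i` of a Hermitian matrix
(`0` for non-Hermitian matrices; `log` is the natural logarithm, `0 log 0 = 0`). -/
noncomputable def vnEntropy {d : ℕ} (A : Matrix (Fin d) (Fin d) ℂ) : ℝ :=
  if hA : A.IsHermitian then -∑ i, hA.eigenvalues i * Real.log (hA.eigenvalues i) else 0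

namespace FA
open Matrix

variable {N : ℕ} {A : Matrix (Fin N) (Fin N) ℂ}

lemma star_mul_selfU (hA : A.IsHermitian) :
    (star (hA.eigenvectorUnitary : Matrix (Fin N) (Fin N) ℂ)) *
      (hA.eigenvectorUnitary : Matrix (Fin N) (Fin N) ℂ) = 1 :=
  Unitary.coe_star_mul_self _

lemma diag_real (f : Fin N → ℝ) :
    (Matrix.diagonal (RCLike.ofReal ∘ f) : Matrix (Fin N) (Fin N) ℂ).IsHermitian := by
  unfold Matrix.IsHermitian
  rw [diagonal_conjTranspose]
  have : (star (RCLike.ofReal ∘ f) : Fin N → ℂ) = RCLike.ofReal ∘ f := by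
    funext i; simp [Function.comp, RCLike.star_def]
  rw [this]

/-- trace of a cfc matrix -/
lemma cfc_trace (hA : A.IsHermitian) (f : ℝ → ℝ) :
    (hA.cfc f).trace = ∑ i, (f (hA.eigenvalues i) : ℂ) := by
  rw [Matrix.IsHermitian.cfc]
  simp only [Unitary.conjStarAlgAut_apply, Unitary.coe_star]
  rw [Matrix.trace_mul_cycle, star_mul_selfU hA,
    one_mul, Matrix.trace_diagonal]
  rfl

lemma cfc_herm (hA : A.IsHermitian) (f : ℝ → ℝ) : (hA.cfc f).IsHermitian := by
  rw [Matrix.IsHermitian.cfc]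
  simp only [Unitary.conjStarAlgAut_apply, Unitary.coe_star]
  unfold Matrix.IsHermitian
  rw [conjTranspose_mul, conjTranspose_mul, (diag_real (f ∘ hA.eigenvalues) : _)]
  simp only [star_star, Matrix.star_eq_conjTranspose, mul_assoc, conjTranspose_conjTranspose]

lemma cfc_psd (hA : A.IsHermitian) (f : ℝ → ℝ) (hf : ∀ x, 0 ≤ f x) :
    (hA.cfc f).PosSemidef := by
  rw [Matrix.IsHermitian.cfc]
  simp only [Unitary.conjStarAlgAut_apply, Unitary.coe_star]
  have h1 : (Matrix.diagonal (RCLike.ofReal ∘ f ∘ hA.eigenvalues) :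
      Matrix (Fin N) (Fin N) ℂ).PosSemidef := by
    rw [Matrix.posSemidef_diagonal_iff]
    intro i
    simpa using (hf (hA.eigenvalues i))
  simpa [Matrix.star_eq_conjTranspose] using h1.mul_mul_conjTranspose_same (hA.eigenvectorUnitary : Matrix (Fin N) (Fin N) ℂ)

lemma cfc_mul (hA : A.IsHermitian) (f g : ℝ → ℝ) :
    hA.cfc f * hA.cfc g = hA.cfc (fun x => f x * g x) := by
  have hdiag : (Matrix.diagonal (RCLike.ofReal ∘ f ∘ hA.eigenvalues) :
      Matrix (Fin N) (Fin N) ℂ) * (Matrix.diagonal (RCLike.ofReal ∘ g ∘ hA.eigenvalues)) =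
      Matrix.diagonal (RCLike.ofReal ∘ (fun x => f x * g x) ∘ hA.eigenvalues) := by
    rw [diagonal_mul_diagonal]
    have : (fun i => ((RCLike.ofReal ∘ f ∘ hA.eigenvalues) i : ℂ) * (RCLike.ofReal ∘ g ∘ hA.eigenvalues) i)
        = RCLike.ofReal ∘ (fun x => f x * g x) ∘ hA.eigenvalues := by
      funext i; simp
    rw [this]
  rw [Matrix.IsHermitian.cfc, Matrix.IsHermitian.cfc, Matrix.IsHermitian.cfc]
  simp only [Unitary.conjStarAlgAut_apply, Unitary.coe_star]
  calc (hA.eigenvectorUnitary : Matrix (Fin N) (Fin N) ℂ) *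
        diagonal (RCLike.ofReal ∘ f ∘ hA.eigenvalues) * star (hA.eigenvectorUnitary : Matrix (Fin N) (Fin N) ℂ) *
        ((hA.eigenvectorUnitary : Matrix (Fin N) (Fin N) ℂ) *
        diagonal (RCLike.ofReal ∘ g ∘ hA.eigenvalues) * star (hA.eigenvectorUnitary : Matrix (Fin N) (Fin N) ℂ))
      = (hA.eigenvectorUnitary : Matrix (Fin N) (Fin N) ℂ) *
        (diagonal (RCLike.ofReal ∘ f ∘ hA.eigenvalues) *
        ((star (hA.eigenvectorUnitary : Matrix (Fin N) (Fin N) ℂ) *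
        (hA.eigenvectorUnitary : Matrix (Fin N) (Fin N) ℂ)) *
        diagonal (RCLike.ofReal ∘ g ∘ hA.eigenvalues))) * star (hA.eigenvectorUnitary : Matrix (Fin N) (Fin N) ℂ) := by
        simp only [mul_assoc]
    _ = _ := by rw [star_mul_selfU hA, one_mul, hdiag]

lemma cfc_sub (hA : A.IsHermitian) (f g : ℝ → ℝ) :
    hA.cfc f - hA.cfc g = hA.cfc (fun x => f x - g x) := by
  have hdiag : (Matrix.diagonal (RCLike.ofReal ∘ f ∘ hA.eigenvalues) :
      Matrix (Fin N) (Fin N) ℂ) - (Matrix.diagonal (RCLike.ofReal ∘ g ∘ hA.eigenvalues)) =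
      Matrix.diagonal (RCLike.ofReal ∘ (fun x => f x - g x) ∘ hA.eigenvalues) := by
    rw [diagonal_sub]
    have : (fun i => ((RCLike.ofReal ∘ f ∘ hA.eigenvalues) i : ℂ) - (RCLike.ofReal ∘ g ∘ hA.eigenvalues) i)
        = RCLike.ofReal ∘ (fun x => f x - g x) ∘ hA.eigenvalues := by
      funext i; simp
    rw [this]
  rw [Matrix.IsHermitian.cfc, Matrix.IsHermitian.cfc, Matrix.IsHermitian.cfc]
  simp only [Unitary.conjStarAlgAut_apply, Unitary.coe_star]
  rw [← Matrix.sub_mul, ← Matrix.mul_sub, hdiag]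

lemma cfc_id (hA : A.IsHermitian) : hA.cfc (fun x => x) = A := by
  rw [Matrix.IsHermitian.cfc]
  exact (hA.spectral_theorem).symm

lemma cfc_one (hA : A.IsHermitian) : hA.cfc (fun _ => 1) = 1 := by
  rw [Matrix.IsHermitian.cfc]
  simp only [Unitary.conjStarAlgAut_apply, Unitary.coe_star]
  have : (Matrix.diagonal (RCLike.ofReal ∘ (fun _ => (1:ℝ)) ∘ hA.eigenvalues) :
      Matrix (Fin N) (Fin N) ℂ) = 1 := by
    have : (RCLike.ofReal ∘ (fun _ => (1:ℝ)) ∘ hA.eigenvalues : Fin N → ℂ) = fun _ => 1 := by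
      ext i; simp
    rw [this, diagonal_one]
  rw [this, mul_one]
  exact Unitary.coe_mul_star_self _

lemma psd_trace_re_nonneg (hA : A.PosSemidef) : 0 ≤ A.trace.re := by
  have h : ∀ i, 0 ≤ (A i i).re := by
    intro i
    have := hA.re_dotProduct_nonneg (Pi.single i 1)
    simpa [dotProduct, Matrix.mulVec, Pi.single_apply, Finset.sum_ite_eq,
      Finset.sum_ite_eq'] using this
  rw [Matrix.trace]
  rw [Complex.re_sum]
  exact Finset.sum_nonneg fun i _ => h i

lemma cfc_congr_eig (hA : A.IsHermitian) (f g : ℝ → ℝ)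
    (h : ∀ i, f (hA.eigenvalues i) = g (hA.eigenvalues i)) : hA.cfc f = hA.cfc g := by
  unfold Matrix.IsHermitian.cfc
  congr 2
  funext i
  simp [h i]

lemma sum_eig_of_charpoly {M : Matrix (Fin N) (Fin N) ℂ} (hM : M.IsHermitian) (g : Fin N → ℝ)
    (h : M.charpoly = ∏ i, (Polynomial.X - Polynomial.C ((g i : ℂ)))) (φ : ℝ → ℝ) :
    ∑ i, φ (hM.eigenvalues i) = ∑ i, φ (g i) := by
  have h1 := hM.roots_charpoly_eq_eigenvalues
  have h2 : M.charpoly.roots = Multiset.map (RCLike.ofReal ∘ g) Finset.univ.val := by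
    rw [h, Polynomial.roots_prod]
    · simp
    · simp [Finset.prod_ne_zero_iff, Polynomial.X_sub_C_ne_zero]
  rw [h1] at h2
  have h3 := congrArg (fun s : Multiset ℂ => (s.map (fun z => φ z.re)).sum) h2
  simpa [Multiset.map_map, Function.comp_def, Finset.sum_eq_multiset_sum] using h3

lemma trace_re_mul_psd_nonneg {B : Matrix (Fin N) (Fin N) ℂ} (hA : A.PosSemidef)
    (hB : B.PosSemidef) : 0 ≤ (A * B).trace.re := by
  set S := hA.1.cfc Real.sqrt with hSdef
  have hs : S.PosSemidef := cfc_psd hA.1 _ Real.sqrt_nonneg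
  have hsm : S * S = A := by
    rw [hSdef, cfc_mul, cfc_congr_eig hA.1 _ (fun x => x)
      (fun i => Real.mul_self_sqrt (hA.eigenvalues_nonneg i)), cfc_id]
  have h1 : A * B = S * (S * B) := by rw [← mul_assoc, hsm]
  have h2 : (A * B).trace = (S * B * S).trace := by
    rw [h1, Matrix.trace_mul_comm, mul_assoc]
  have h3 : (S * B * S).PosSemidef := by
    have := hB.mul_mul_conjTranspose_same S
    rwa [hs.isHermitian.eq] at this
  rw [h2]
  exact psd_trace_re_nonneg h3

/-- trace norm of a Hermitian matrix is the sum of the absolute values of eigenvalues -/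
lemma traceNorm_herm (hA : A.IsHermitian) :
    traceNorm A = ∑ i, |hA.eigenvalues i| := by
  have habs : (hA.cfc (fun x => |x|)).PosSemidef := cfc_psd hA _ fun x => abs_nonneg x
  have hsq : (hA.cfc (fun x => |x|)) ^ 2 = Aᴴ * A := by
    rw [pow_two, cfc_mul]
    have : (fun x => |x| * |x|) = fun x : ℝ => x * x := by funext x; exact abs_mul_abs_self x
    rw [this, ← cfc_mul hA (fun x => x) (fun x => x), cfc_id, hA.eq]
  have hAA := (Matrix.posSemidef_conjTranspose_mul_self A).1
  have e : traceNorm A = (hAA.cfc Real.sqrt).trace.re := by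
    rw [traceNorm, Matrix.IsHermitian.cfc, Unitary.conjStarAlgAut_apply]
    rfl
  rw [e, cfc_trace, Complex.re_sum]
  simp only [Complex.ofReal_re]
  have hch : (Aᴴ * A).charpoly
      = ∏ i, (Polynomial.X - Polynomial.C (((hA.eigenvalues i * hA.eigenvalues i : ℝ)) : ℂ)) := by
    have : Aᴴ * A = cfc (fun x : ℝ => x * x) A := by
      rw [hA.cfc_eq, ← cfc_mul hA (fun x => x) (fun x => x), cfc_id, hA.eq]
    rw [this, hA.charpoly_cfc_eq]
    rfl
  rw [sum_eig_of_charpoly hAA _ hch Real.sqrt]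
  exact Finset.sum_congr rfl fun i _ => Real.sqrt_mul_self_eq_abs _

lemma traceNorm_psd (hA : A.PosSemidef) : traceNorm A = A.trace.re := by
  have hsq : A ^ 2 = Aᴴ * A := by rw [pow_two, hA.isHermitian.eq]
  rw [traceNorm_herm hA.1]
  have h := cfc_trace hA.1 (fun x => x)
  rw [cfc_id] at h
  rw [h, Complex.re_sum]
  simp only [Complex.ofReal_re]
  exact Finset.sum_congr rfl fun i _ => abs_of_nonneg (hA.eigenvalues_nonneg i)

/-- the positive/negative part decomposition of trace norm -/
lemma traceNorm_herm_eq_pos_add_neg (hA : A.IsHermitian) :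
    traceNorm A = (hA.cfc (fun x => max x 0)).trace.re + (hA.cfc (fun x => max (-x) 0)).trace.re := by
  rw [traceNorm_herm hA, cfc_trace, cfc_trace, Complex.re_sum, Complex.re_sum,
    ← Finset.sum_add_distrib]
  congr 1
  funext i
  simp only [Complex.ofReal_re]
  rcases le_total (hA.eigenvalues i) 0 with h | h
  · rw [abs_of_nonpos h, max_eq_right h, max_eq_left (by linarith : (0:ℝ) ≤ -hA.eigenvalues i)]
    ring
  · rw [abs_of_nonneg h, max_eq_left h, max_eq_right (by linarith : -hA.eigenvalues i ≤ 0)]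
    ring

/-- projection compression preserves trace bounds -/
lemma proj_trace_bound (hA : A.IsHermitian) (χ : ℝ → ℝ) (hχ : ∀ x, χ x = 0 ∨ χ x = 1)
    {R : Matrix (Fin N) (Fin N) ℂ} (hR : R.PosSemidef) :
    0 ≤ (hA.cfc χ * R * hA.cfc χ).trace.re ∧ (hA.cfc χ * R * hA.cfc χ).trace.re ≤ R.trace.re := by
  have hχsq : ∀ x, χ x * χ x = χ x := by
    intro x; rcases hχ x with h | h <;> rw [h] <;> ring
  have hχ01 : ∀ x, (0:ℝ) ≤ χ x := by
    intro x; rcases hχ x with h | h <;> rw [h] <;> norm_num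
  have hPrpsd : (hA.cfc χ).PosSemidef := cfc_psd hA _ hχ01
  have hPrherm := hPrpsd.isHermitian
  have hpsd1 : (hA.cfc χ * R * hA.cfc χ).PosSemidef := by
    have := hR.mul_mul_conjTranspose_same (hA.cfc χ)
    rwa [hPrherm.eq] at this
  have h1m : (1 : Matrix (Fin N) (Fin N) ℂ) - hA.cfc χ = hA.cfc (fun x => 1 - χ x) := by
    rw [← cfc_one hA, cfc_sub]
  have h1herm : ((1: Matrix (Fin N) (Fin N) ℂ) - hA.cfc χ).IsHermitian := by
    rw [h1m]; exact cfc_herm hA _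
  have hcompl : ((1 - hA.cfc χ) * R * (1 - hA.cfc χ)).PosSemidef := by
    have := hR.mul_mul_conjTranspose_same ((1: Matrix (Fin N) (Fin N) ℂ) - hA.cfc χ)
    rwa [h1herm.eq] at this
  have hcc : hA.cfc χ * hA.cfc χ = hA.cfc χ := by
    rw [cfc_mul]; exact congrArg _ (funext hχsq)
  have h1cc : ((1: Matrix (Fin N) (Fin N) ℂ) - hA.cfc χ) * ((1: Matrix (Fin N) (Fin N) ℂ) - hA.cfc χ)
      = (1: Matrix (Fin N) (Fin N) ℂ) - hA.cfc χ := by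
    rw [h1m, cfc_mul]
    exact congrArg _ (funext fun x => by rcases hχ x with h | h <;> rw [h] <;> ring)
  have hsplit : (hA.cfc χ * R * hA.cfc χ).trace + ((1 - hA.cfc χ) * R * (1 - hA.cfc χ)).trace
      = R.trace := by
    rw [Matrix.trace_mul_cycle (hA.cfc χ) R (hA.cfc χ),
      Matrix.trace_mul_cycle ((1:Matrix (Fin N) (Fin N) ℂ) - hA.cfc χ) R
        ((1:Matrix (Fin N) (Fin N) ℂ) - hA.cfc χ), hcc, h1cc, ← Matrix.trace_add, ← Matrix.add_mul]
    rw [show hA.cfc χ + ((1:Matrix (Fin N) (Fin N) ℂ) - hA.cfc χ) = 1 by abel, one_mul]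
  have h2 := psd_trace_re_nonneg hcompl
  have h1 := psd_trace_re_nonneg hpsd1
  have hre : (hA.cfc χ * R * hA.cfc χ).trace.re + ((1 - hA.cfc χ) * R * (1 - hA.cfc χ)).trace.re
      = R.trace.re := by rw [← Complex.add_re, hsplit]
  exact ⟨h1, by linarith⟩

/-- Key: if a Hermitian matrix is a difference of two PSD matrices, its trace norm is
bounded by the sum of traces. -/
lemma traceNorm_le_of_sub {P Q : Matrix (Fin N) (Fin N) ℂ} (hA : A.IsHermitian)
    (hP : P.PosSemidef) (hQ : Q.PosSemidef) (hPQ : A = P - Q) :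
    traceNorm A ≤ P.trace.re + Q.trace.re := by
  have key : ∀ χ : ℝ → ℝ, (∀ x, χ x = 0 ∨ χ x = 1) →
      -Q.trace.re ≤ (hA.cfc (fun x => χ x * x * χ x)).trace.re ∧
      (hA.cfc (fun x => χ x * x * χ x)).trace.re ≤ P.trace.re := by
    intro χ hχ
    have hthis : hA.cfc χ * hA.cfc (fun x => x) * hA.cfc χ = hA.cfc (fun x => χ x * x * χ x) := by
      rw [cfc_mul, cfc_mul]
    rw [cfc_id] at hthis
    have e2 : hA.cfc χ * (P - Q) * hA.cfc χ = hA.cfc (fun x => χ x * x * χ x) := by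
      rw [← hPQ]; exact hthis
    have e1 : hA.cfc χ * (P - Q) * hA.cfc χ = hA.cfc χ * P * hA.cfc χ - hA.cfc χ * Q * hA.cfc χ := by
      rw [Matrix.mul_sub, Matrix.sub_mul]
    have hcfcPQ : hA.cfc (fun x => χ x * x * χ x)
        = hA.cfc χ * P * hA.cfc χ - hA.cfc χ * Q * hA.cfc χ := e2.symm.trans e1
    have hPb := proj_trace_bound hA χ hχ hP
    have hQb := proj_trace_bound hA χ hχ hQ
    have hre : (hA.cfc (fun x => χ x * x * χ x)).trace.re
        = (hA.cfc χ * P * hA.cfc χ).trace.re - (hA.cfc χ * Q * hA.cfc χ).trace.re := by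
      rw [hcfcPQ, Matrix.trace_sub, Complex.sub_re]
    constructor
    · rw [hre]; have := hPb.1; have := hQb.2; linarith
    · rw [hre]; have := hPb.2; have := hQb.1; linarith
  have hpos : hA.cfc (fun x => max x 0) = hA.cfc (fun x => (if 0 < x then (1:ℝ) else 0) * x * (if 0 < x then (1:ℝ) else 0)) := by
    refine congrArg _ (funext fun x => ?_)
    by_cases h : 0 < x
    · simp [h, max_eq_left h.le]
    · push_neg at h
      simp [not_lt.mpr h, max_eq_right h, if_neg (not_lt.mpr h)]
  have hneg : hA.cfc (fun x => max (-x) 0) = -hA.cfc (fun x => (if x < 0 then (1:ℝ) else 0) * x * (if x < 0 then (1:ℝ) else 0)) := by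
    have : hA.cfc (fun x => (if x < 0 then (1:ℝ) else 0) * x * (if x < 0 then (1:ℝ) else 0))
        = hA.cfc (fun x => (0:ℝ) - max (-x) 0) := by
      refine congrArg _ (funext fun x => ?_)
      by_cases h : x < 0
      · simp only [if_pos h]
        rw [max_eq_left (by linarith : (0:ℝ) ≤ -x)]
        ring
      · push_neg at h
        simp only [if_neg (not_lt.mpr h)]
        rw [max_eq_right (by linarith : -x ≤ 0)]
        ring
    rw [this, ← cfc_sub hA (fun _ => 0) (fun x => max (-x) 0)]
    have h0 : hA.cfc (fun _ => (0:ℝ)) = 0 := by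
      have : hA.cfc (fun x => (0:ℝ)) = hA.cfc (fun x => (fun _ => (1:ℝ)) x - (fun _ => (1:ℝ)) x) := by
        exact congrArg _ (funext fun x => by ring)
      rw [this, ← cfc_sub, cfc_one, sub_self]
    rw [h0, zero_sub, neg_neg]
  have hkp := key (fun x => if 0 < x then (1:ℝ) else 0) (fun x => by by_cases h : 0 < x <;> simp [h])
  have hkn := key (fun x => if x < 0 then (1:ℝ) else 0) (fun x => by by_cases h : x < 0 <;> simp [h])
  rw [traceNorm_herm_eq_pos_add_neg hA, hpos, hneg]
  have hnegre : (-hA.cfc (fun x => (if x < 0 then (1:ℝ) else 0) * x * (if x < 0 then (1:ℝ) else 0))).trace.re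
      = -(hA.cfc (fun x => (if x < 0 then (1:ℝ) else 0) * x * (if x < 0 then (1:ℝ) else 0))).trace.re := by
    rw [Matrix.trace_neg, Complex.neg_re]
  rw [hnegre]
  have := hkp.2
  have := hkn.1
  linarith

section Kraus
variable {N' m : ℕ}

/-- Kraus maps send Hermitian to Hermitian -/
lemma kraus_herm (K : Fin m → Matrix (Fin N') (Fin N) ℂ) {X : Matrix (Fin N) (Fin N) ℂ}
    (hX : X.IsHermitian) : (∑ i, K i * X * (K i)ᴴ).IsHermitian := by
  unfold Matrix.IsHermitian
  rw [conjTranspose_sum]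
  congr 1
  funext i
  rw [conjTranspose_mul, conjTranspose_mul, conjTranspose_conjTranspose, hX.eq, ← Matrix.mul_assoc]

lemma kraus_psd (K : Fin m → Matrix (Fin N') (Fin N) ℂ) {X : Matrix (Fin N) (Fin N) ℂ}
    (hX : X.PosSemidef) : (∑ i, K i * X * (K i)ᴴ).PosSemidef := by
  exact Finset.sum_induction (fun i => K i * X * (K i)ᴴ) (fun M => M.PosSemidef)
    (fun a b ha hb => ha.add hb) Matrix.PosSemidef.zero
    (fun i _ => hX.mul_mul_conjTranspose_same (K i))

lemma kraus_sub (K : Fin m → Matrix (Fin N') (Fin N) ℂ) (X Y : Matrix (Fin N) (Fin N) ℂ) :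
    (∑ i, K i * (X - Y) * (K i)ᴴ) = (∑ i, K i * X * (K i)ᴴ) - ∑ i, K i * Y * (K i)ᴴ := by
  rw [← Finset.sum_sub_distrib]
  congr 1
  funext i
  rw [Matrix.mul_sub, Matrix.sub_mul]

lemma kraus_trace_le (K : Fin m → Matrix (Fin N') (Fin N) ℂ)
    (hK : ((1 : Matrix (Fin N) (Fin N) ℂ) - ∑ i, (K i)ᴴ * K i).PosSemidef)
    {X : Matrix (Fin N) (Fin N) ℂ} (hX : X.PosSemidef) :
    (∑ i, K i * X * (K i)ᴴ).trace.re ≤ X.trace.re := by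
  have h1 : (∑ i, K i * X * (K i)ᴴ).trace = ((∑ i, (K i)ᴴ * K i) * X).trace := by
    rw [Matrix.trace_sum, Matrix.sum_mul, Matrix.trace_sum]
    congr 1
    funext i
    rw [Matrix.trace_mul_cycle]
  have h2 : (((1 : Matrix (Fin N) (Fin N) ℂ) - ∑ i, (K i)ᴴ * K i) * X).trace
      = X.trace - ((∑ i, (K i)ᴴ * K i) * X).trace := by
    rw [Matrix.sub_mul, Matrix.trace_sub, one_mul]
  have h3 := trace_re_mul_psd_nonneg hK hX
  rw [h2] at h3
  rw [Complex.sub_re] at h3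
  rw [h1]
  linarith

lemma kraus_traceNorm_le (K : Fin m → Matrix (Fin N') (Fin N) ℂ)
    (hK : ((1 : Matrix (Fin N) (Fin N) ℂ) - ∑ i, (K i)ᴴ * K i).PosSemidef)
    {Δ : Matrix (Fin N) (Fin N) ℂ} (hΔ : Δ.IsHermitian) :
    traceNorm (∑ i, K i * Δ * (K i)ᴴ) ≤ traceNorm Δ := by
  set R := hΔ.cfc (fun x => max x 0) with hRdef
  set S := hΔ.cfc (fun x => max (-x) 0) with hSdef
  have hRS : Δ = R - S := by
    rw [hRdef, hSdef, cfc_sub]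
    have : (fun x => max x 0 - max (-x) 0) = fun x : ℝ => x := by
      funext x
      rcases le_total x 0 with h | h
      · rw [max_eq_right h, max_eq_left (by linarith : (0:ℝ) ≤ -x)]; ring
      · rw [max_eq_left h, max_eq_right (by linarith : -x ≤ 0)]; ring
    rw [this, cfc_id]
  have hRpsd : R.PosSemidef := cfc_psd hΔ _ fun x => le_max_right _ _
  have hSpsd : S.PosSemidef := cfc_psd hΔ _ fun x => le_max_right _ _
  have hsub : (∑ i, K i * Δ * (K i)ᴴ) = (∑ i, K i * R * (K i)ᴴ) - ∑ i, K i * S * (K i)ᴴ := by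
    conv_lhs => rw [hRS]
    exact kraus_sub K R S
  calc traceNorm (∑ i, K i * Δ * (K i)ᴴ)
      ≤ (∑ i, K i * R * (K i)ᴴ).trace.re + (∑ i, K i * S * (K i)ᴴ).trace.re :=
        traceNorm_le_of_sub (kraus_herm K hΔ) (kraus_psd K hRpsd) (kraus_psd K hSpsd) hsub
    _ ≤ R.trace.re + S.trace.re :=
        add_le_add (kraus_trace_le K hK hRpsd) (kraus_trace_le K hK hSpsd)
    _ = traceNorm Δ := (traceNorm_herm_eq_pos_add_neg hΔ).symm


end Kraus

section Weyl

lemma dot_sum_left (f : Fin N → (Fin N → ℂ)) (w : Fin N → ℂ) :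
    dotProduct (∑ j, f j) w = ∑ j, dotProduct (f j) w := by
  simp only [dotProduct, Finset.sum_apply, Finset.sum_mul]
  exact Finset.sum_comm

lemma dot_sum_right (w : Fin N → ℂ) (f : Fin N → (Fin N → ℂ)) :
    dotProduct w (∑ j, f j) = ∑ j, dotProduct w (f j) := by
  simp only [dotProduct, Finset.sum_apply, Finset.mul_sum]
  exact Finset.sum_comm

/-- orthonormality of the eigenvector functions in terms of dot products -/
lemma eigvec_orth (hA : A.IsHermitian) (j k : Fin N) :
    dotProduct (star ⇑(hA.eigenvectorBasis j)) ⇑(hA.eigenvectorBasis k)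
      = if j = k then 1 else 0 := by
  have horth := hA.eigenvectorBasis.orthonormal
  rw [orthonormal_iff_ite] at horth
  have := horth j k
  rwa [EuclideanSpace.inner_eq_star_dotProduct, dotProduct_comm] at this

/-- evaluation of dot products of linear combinations of eigenvectors -/
lemma dot_eval (hA : A.IsHermitian) (c d : Fin N → ℂ) :
    dotProduct (star (∑ j, c j • ⇑(hA.eigenvectorBasis j)))
      (∑ j, d j • ⇑(hA.eigenvectorBasis j)) = ∑ j, (starRingEnd ℂ) (c j) * d j := by
  rw [star_sum, dot_sum_left]
  congr 1
  funext j
  rw [star_smul, dot_sum_right]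
  have : ∀ k, dotProduct (star (c j) • star ⇑(hA.eigenvectorBasis j))
      (d k • ⇑(hA.eigenvectorBasis k))
      = (starRingEnd ℂ) (c j) * d k * (if j = k then 1 else 0) := by
    intro k
    rw [smul_dotProduct, dotProduct_smul, eigvec_orth hA j k]
    simp only [smul_eq_mul, RCLike.star_def]
    ring
  rw [Finset.sum_congr rfl fun k _ => this k]
  simp

lemma mulVec_eig_c (hA : A.IsHermitian) (j : Fin N) :
    A *ᵥ ⇑(hA.eigenvectorBasis j) = ((hA.eigenvalues j : ℂ)) • ⇑(hA.eigenvectorBasis j) := by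
  rw [hA.mulVec_eigenvectorBasis]
  funext i
  simp [Pi.smul_apply, Complex.real_smul]

lemma mulVec_comb (hA : A.IsHermitian) (c : Fin N → ℂ) :
    A *ᵥ (∑ j, c j • ⇑(hA.eigenvectorBasis j))
      = ∑ j, (c j * (hA.eigenvalues j : ℂ)) • ⇑(hA.eigenvectorBasis j) := by
  have h1 : A *ᵥ (∑ j, c j • ⇑(hA.eigenvectorBasis j))
      = ∑ j, A *ᵥ (c j • ⇑(hA.eigenvectorBasis j)) := by
    rw [show ∀ v, A *ᵥ v = A.mulVecLin v from fun v => rfl]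
    exact map_sum A.mulVecLin _ _
  rw [h1]
  congr 1
  funext j
  rw [show A *ᵥ (c j • ⇑(hA.eigenvectorBasis j)) = A.mulVecLin (c j • ⇑(hA.eigenvectorBasis j)) from rfl,
    _root_.map_smul, Matrix.mulVecLin_apply, mulVec_eig_c hA, smul_smul]

/-- quadratic form evaluation -/
lemma q_eval (hA : A.IsHermitian) (c : Fin N → ℂ) :
    (dotProduct (star (∑ j, c j • ⇑(hA.eigenvectorBasis j)))
      (A *ᵥ (∑ j, c j • ⇑(hA.eigenvectorBasis j)))).re
      = ∑ j, hA.eigenvalues j * Complex.normSq (c j) := by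
  rw [mulVec_comb hA, dot_eval hA]
  rw [Complex.re_sum]
  congr 1
  funext j
  have : (starRingEnd ℂ) (c j) * (c j * (hA.eigenvalues j : ℂ))
      = (hA.eigenvalues j : ℂ) * ((starRingEnd ℂ) (c j) * c j) := by ring
  rw [this]
  rw [show (starRingEnd ℂ) (c j) * c j = (Complex.normSq (c j) : ℂ) by
    rw [mul_comm]; exact Complex.mul_conj (c j)]
  rw [← Complex.ofReal_mul]
  simp

lemma n_eval (hA : A.IsHermitian) (c : Fin N → ℂ) :
    (dotProduct (star (∑ j, c j • ⇑(hA.eigenvectorBasis j)))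
      (∑ j, c j • ⇑(hA.eigenvectorBasis j))).re = ∑ j, Complex.normSq (c j) := by
  rw [dot_eval hA, Complex.re_sum]
  congr 1
  funext j
  rw [show (starRingEnd ℂ) (c j) * c j = (Complex.normSq (c j) : ℂ) by
    rw [mul_comm]; exact Complex.mul_conj (c j)]
  simp

/-- membership in the span of selected eigenvectors gives a coefficient representation -/
lemma span_coeff (hA : A.IsHermitian) (I : Finset (Fin N)) {x : Fin N → ℂ}
    (hx : x ∈ Submodule.span ℂ (Set.range fun j : {j // j ∈ I} => ⇑(hA.eigenvectorBasis j.1))) :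
    ∃ c : Fin N → ℂ, (∀ j ∉ I, c j = 0) ∧ x = ∑ j, c j • ⇑(hA.eigenvectorBasis j) := by
  rw [Submodule.mem_span_range_iff_exists_fun] at hx
  obtain ⟨c', hc'⟩ := hx
  classical
  refine ⟨fun j => if h : j ∈ I then c' ⟨j, h⟩ else 0, fun j hj => by simp [hj], ?_⟩
  rw [← hc']
  have h2 : (∑ j, (fun j => if h : j ∈ I then c' ⟨j, h⟩ else 0) j • ⇑(hA.eigenvectorBasis j))
      = ∑ j ∈ I, (if h : j ∈ I then c' ⟨j, h⟩ else (0:ℂ)) • ⇑(hA.eigenvectorBasis j) := by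
    symm
    apply Finset.sum_subset (Finset.subset_univ I)
    intro j _ hj
    simp [hj]
  rw [h2, ← Finset.sum_attach I (fun j => (if h : j ∈ I then c' ⟨j, h⟩ else (0:ℂ)) • ⇑(hA.eigenvectorBasis j))]
  apply Finset.sum_congr rfl
  intro i _
  simp [i.2]


lemma lin_indep_eigvec (hA : A.IsHermitian) :
    LinearIndependent ℂ (fun j : Fin N => ⇑(hA.eigenvectorBasis j)) := by
  rw [Fintype.linearIndependent_iff]
  intro g hg k
  have := congrArg (fun y => dotProduct (star ⇑(hA.eigenvectorBasis k)) y) hg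
  simp only at this
  rw [dot_sum_right] at this
  have heval : ∀ j, dotProduct (star ⇑(hA.eigenvectorBasis k)) (g j • ⇑(hA.eigenvectorBasis j))
      = g j * (if k = j then 1 else 0) := by
    intro j
    rw [dotProduct_smul, eigvec_orth hA k j]
    simp
  rw [Finset.sum_congr rfl fun j _ => heval j] at this
  simpa using this

lemma finrank_span_eigvec (hA : A.IsHermitian) (I : Finset (Fin N)) :
    Module.finrank ℂ (Submodule.span ℂ
      (Set.range fun j : {j // j ∈ I} => ⇑(hA.eigenvectorBasis j.1))) = I.card := by
  rw [finrank_span_eq_card]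
  · exact Fintype.card_coe I
  · exact (lin_indep_eigvec hA).comp Subtype.val Subtype.val_injective

lemma exists_mem_both {U W : Submodule ℂ (Fin N → ℂ)}
    (h : N < Module.finrank ℂ U + Module.finrank ℂ W) :
    ∃ x : Fin N → ℂ, x ≠ 0 ∧ x ∈ U ∧ x ∈ W := by
  have h1 := Submodule.finrank_sup_add_finrank_inf_eq U W
  have h2 : Module.finrank ℂ ↥(U ⊔ W) ≤ N := by
    have := Submodule.finrank_le (U ⊔ W)
    simpa [Module.finrank_pi] using this
  have h3 : 0 < Module.finrank ℂ ↥(U ⊓ W) := by omega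
  rw [Module.finrank_pos_iff] at h3
  obtain ⟨y, hy⟩ := exists_ne (0 : ↥(U ⊓ W))
  refine ⟨y.1, ?_, (Submodule.mem_inf.mp y.2).1, (Submodule.mem_inf.mp y.2).2⟩
  simpa [Submodule.coe_eq_zero] using hy

/-- lower bound for the quadratic form on a span of eigenvectors -/
lemma q_ge_on_span (hA : A.IsHermitian) (I : Finset (Fin N)) (b : ℝ)
    (hb : ∀ j ∈ I, b ≤ hA.eigenvalues j) {x : Fin N → ℂ}
    (hx : x ∈ Submodule.span ℂ (Set.range fun j : {j // j ∈ I} => ⇑(hA.eigenvectorBasis j.1))) :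
    b * (dotProduct (star x) x).re ≤ (dotProduct (star x) (A *ᵥ x)).re := by
  obtain ⟨c, hc0, rfl⟩ := span_coeff hA I hx
  rw [q_eval hA, n_eval hA, Finset.mul_sum]
  apply Finset.sum_le_sum
  intro j _
  by_cases hj : j ∈ I
  · exact mul_le_mul_of_nonneg_right (hb j hj) (Complex.normSq_nonneg _)
  · rw [hc0 j hj]
    simp

lemma q_le_on_span (hA : A.IsHermitian) (I : Finset (Fin N)) (b : ℝ)
    (hb : ∀ j ∈ I, hA.eigenvalues j ≤ b) {x : Fin N → ℂ}
    (hx : x ∈ Submodule.span ℂ (Set.range fun j : {j // j ∈ I} => ⇑(hA.eigenvectorBasis j.1))) :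
    (dotProduct (star x) (A *ᵥ x)).re ≤ b * (dotProduct (star x) x).re := by
  obtain ⟨c, hc0, rfl⟩ := span_coeff hA I hx
  rw [q_eval hA, n_eval hA, Finset.mul_sum]
  apply Finset.sum_le_sum
  intro j _
  by_cases hj : j ∈ I
  · exact mul_le_mul_of_nonneg_right (hb j hj) (Complex.normSq_nonneg _)
  · rw [hc0 j hj]
    simp

lemma norm_pos_of_ne_zero {x : Fin N → ℂ} (hx : x ≠ 0) :
    0 < (dotProduct (star x) x).re := by
  obtain ⟨i, hi⟩ := Function.ne_iff.mp hx
  have hterm : ∀ k, ((star x) k * x k).re = Complex.normSq (x k) := by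
    intro k
    simp only [Pi.star_apply, RCLike.star_def]
    rw [show (starRingEnd ℂ) (x k) * x k = (Complex.normSq (x k) : ℂ) by
      rw [mul_comm]; exact Complex.mul_conj (x k)]
    simp
  rw [dotProduct, Complex.re_sum]
  rw [Finset.sum_congr rfl fun k _ => hterm k]
  apply Finset.sum_pos' (fun k _ => Complex.normSq_nonneg _)
  exact ⟨i, Finset.mem_univ i, by simpa [Complex.normSq_pos] using hi⟩

/-- the eigenvalues of a Hermitian matrix, sorted in increasing order -/
noncomputable def sortEig (hA : A.IsHermitian) : Fin N → ℝ :=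
  hA.eigenvalues ∘ Tuple.sort hA.eigenvalues

/-- Weyl monotonicity: adding a PSD matrix increases all sorted eigenvalues -/
lemma weyl {A E : Matrix (Fin N) (Fin N) ℂ} (hA : A.IsHermitian) (hE : E.PosSemidef)
    (hB : (A + E).IsHermitian) (i : Fin N) : sortEig hA i ≤ sortEig hB i := by
  classical
  set sA := Tuple.sort hA.eigenvalues with hsA
  set sB := Tuple.sort (hB).eigenvalues with hsB
  set I : Finset (Fin N) := (Finset.Ici i).image sA with hI
  set J : Finset (Fin N) := (Finset.Iic i).image sB with hJ
  have hIcard : I.card = N - i.1 := by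
    rw [hI, Finset.card_image_of_injective _ sA.injective, Fin.card_Ici]
  have hJcard : J.card = i.1 + 1 := by
    rw [hJ, Finset.card_image_of_injective _ sB.injective, Fin.card_Iic]
  have hdim : N < I.card + J.card := by
    rw [hIcard, hJcard]
    have := i.2
    omega
  set U := Submodule.span ℂ (Set.range fun j : {j // j ∈ I} => ⇑(hA.eigenvectorBasis j.1)) with hU
  set W := Submodule.span ℂ (Set.range fun j : {j // j ∈ J} => ⇑(hB.eigenvectorBasis j.1)) with hW
  have hrk : N < Module.finrank ℂ U + Module.finrank ℂ W := by
    rw [hU, hW, finrank_span_eigvec hA I, finrank_span_eigvec hB J]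
    exact hdim
  obtain ⟨x, hx0, hxU, hxW⟩ := exists_mem_both hrk
  have hbI : ∀ j ∈ I, sortEig hA i ≤ hA.eigenvalues j := by
    intro j hj
    rw [hI] at hj
    obtain ⟨k, hk, rfl⟩ := Finset.mem_image.mp hj
    exact Tuple.monotone_sort hA.eigenvalues (Finset.mem_Ici.mp hk)
  have hbJ : ∀ j ∈ J, (hB).eigenvalues j ≤ sortEig hB i := by
    intro j hj
    rw [hJ] at hj
    obtain ⟨k, hk, rfl⟩ := Finset.mem_image.mp hj
    exact Tuple.monotone_sort (hB).eigenvalues (Finset.mem_Iic.mp hk)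
  have h1 := q_ge_on_span hA I (sortEig hA i) hbI hxU
  have h2 := q_le_on_span hB J (sortEig hB i) hbJ hxW
  have h3 : (dotProduct (star x) (A *ᵥ x)).re
      ≤ (dotProduct (star x) ((A + E) *ᵥ x)).re := by
    rw [Matrix.add_mulVec, dotProduct_add, Complex.add_re]
    have h0 := hE.re_dotProduct_nonneg x
    rw [RCLike.re_to_complex] at h0
    linarith
  have h4 := norm_pos_of_ne_zero hx0
  have h5 : sortEig hA i * (dotProduct (star x) x).re
      ≤ sortEig hB i * (dotProduct (star x) x).re := by linarith
  exact le_of_mul_le_mul_right (by linarith [h5]) h4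

/-- the trace is the sum of the eigenvalues -/
lemma trace_re_eq_sum_eig (hA : A.IsHermitian) : A.trace.re = ∑ i, hA.eigenvalues i := by
  have h := cfc_trace hA (fun x => x)
  rw [cfc_id hA] at h
  rw [h, Complex.re_sum]
  simp

lemma sum_sortEig (hA : A.IsHermitian) : ∑ i, sortEig hA i = A.trace.re := by
  rw [trace_re_eq_sum_eig hA, sortEig]
  exact Equiv.sum_comp (Tuple.sort hA.eigenvalues) hA.eigenvalues

end Weyl

section Perturb

lemma jordan_decomp {Δ : Matrix (Fin N) (Fin N) ℂ} (hΔ : Δ.IsHermitian) :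
    Δ = hΔ.cfc (fun x => max x 0) - hΔ.cfc (fun x => max (-x) 0) := by
  rw [cfc_sub]
  have : (fun x => max x 0 - max (-x) 0) = fun x : ℝ => x := by
    funext x
    rcases le_total x 0 with h | h
    · rw [max_eq_right h, max_eq_left (by linarith : (0:ℝ) ≤ -x)]; ring
    · rw [max_eq_left h, max_eq_right (by linarith : -x ≤ 0)]; ring
  rw [this, cfc_id]

lemma weyl' {A E V : Matrix (Fin N) (Fin N) ℂ} (hA : A.IsHermitian) (hE : E.PosSemidef)
    (hV : V.IsHermitian) (hVeq : V = A + E) (i : Fin N) : sortEig hA i ≤ sortEig hV i := by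
  subst hVeq
  exact weyl hA hE hV i

/-- L1 distance of sorted eigenvalues is dominated by the trace norm -/
lemma sum_abs_sortEig_sub_le {A B : Matrix (Fin N) (Fin N) ℂ}
    (hA : A.IsHermitian) (hB : B.IsHermitian) :
    ∑ i, |sortEig hA i - sortEig hB i| ≤ traceNorm (A - B) := by
  have hΔ : (A - B).IsHermitian := hA.sub hB
  set R := hΔ.cfc (fun x => max x 0) with hRdef
  set S := hΔ.cfc (fun x => max (-x) 0) with hSdef
  have hRS : A - B = R - S := jordan_decomp hΔ
  have hRpsd : R.PosSemidef := cfc_psd hΔ _ fun x => le_max_right _ _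
  have hSpsd : S.PosSemidef := cfc_psd hΔ _ fun x => le_max_right _ _
  set V := A + S with hVdef
  have hV : V.IsHermitian := hA.add hSpsd.isHermitian
  have hVB : V = B + R := by
    calc V = (A - B) + (B + S) := by rw [hVdef]; abel
    _ = (R - S) + (B + S) := by rw [hRS]
    _ = B + R := by abel
  have h1 : ∀ i, sortEig hA i ≤ sortEig hV i := weyl' hA hSpsd hV rfl
  have h2 : ∀ i, sortEig hB i ≤ sortEig hV i := weyl' hB hRpsd hV hVB
  have hptw : ∀ i, |sortEig hA i - sortEig hB i|
      ≤ 2 * sortEig hV i - sortEig hA i - sortEig hB i := by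
    intro i
    rw [abs_le]
    constructor
    · have := h1 i; have := h2 i; linarith
    · have := h1 i; have := h2 i; linarith
  calc ∑ i, |sortEig hA i - sortEig hB i|
      ≤ ∑ i, (2 * sortEig hV i - sortEig hA i - sortEig hB i) :=
        Finset.sum_le_sum fun i _ => hptw i
    _ = 2 * V.trace.re - A.trace.re - B.trace.re := by
        rw [Finset.sum_sub_distrib, Finset.sum_sub_distrib, ← Finset.mul_sum,
          sum_sortEig hV, sum_sortEig hA, sum_sortEig hB]
    _ = R.trace.re + S.trace.re := by
        have hVtr : V.trace.re = A.trace.re + S.trace.re := by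
          rw [hVdef, Matrix.trace_add, Complex.add_re]
        have hVtr' : V.trace.re = B.trace.re + R.trace.re := by
          rw [hVB, Matrix.trace_add, Complex.add_re]
        linarith
    _ = traceNorm (A - B) := (traceNorm_herm_eq_pos_add_neg hΔ).symm

end Perturb

section Scalar
open Real

lemma log_le_neg_one {t : ℝ} (ht : 0 < t) (hte : t ≤ 1 / Real.exp 1) : Real.log t ≤ -1 := by
  have := Real.log_le_log ht hte
  rwa [one_div, Real.log_inv, Real.log_exp] at this

lemma inv_e_le_one : 1 / Real.exp 1 ≤ 1 := by
  rw [div_le_one (Real.exp_pos 1)]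
  linarith [Real.add_one_le_exp 1]

lemma x_log_ratio {x b : ℝ} (hx : 0 < x) (hb : 0 < b) :
    x * (Real.log b - Real.log x) ≤ b - x := by
  have h := Real.log_le_sub_one_of_pos (show 0 < b / x by positivity)
  rw [Real.log_div hb.ne' hx.ne'] at h
  have := mul_le_mul_of_nonneg_left h hx.le
  calc x * (Real.log b - Real.log x) ≤ x * (b / x - 1) := this
    _ = b - x := by field_simp

lemma eta_S1 {x t : ℝ} (hx : 0 ≤ x) (ht : 0 ≤ t) :
    negMulLog (x + t) - negMulLog x ≤ negMulLog t := by
  rcases eq_or_lt_of_le hx with h | hx0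
  · simp [← h]
  rcases eq_or_lt_of_le ht with h | ht0
  · simp [← h]
  have h1 : x * Real.log x ≤ x * Real.log (x + t) :=
    mul_le_mul_of_nonneg_left (Real.log_le_log hx0 (by linarith)) hx
  have h2 : t * Real.log t ≤ t * Real.log (x + t) :=
    mul_le_mul_of_nonneg_left (Real.log_le_log ht0 (by linarith)) ht
  simp only [negMulLog]
  nlinarith [h1, h2]

lemma eta_S2 {x t : ℝ} (hx : 0 ≤ x) (ht : 0 < t) (hxt : x + t ≤ 1)
    (hte : t ≤ 1 / Real.exp 1) :
    negMulLog x - negMulLog (x + t) ≤ negMulLog t := by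
  have hηt : t ≤ -t * Real.log t := by
    have := log_le_neg_one ht hte
    nlinarith
  rcases eq_or_lt_of_le hx with h | hx0
  · have h0 : negMulLog 0 = 0 := negMulLog_zero
    rw [← h, h0, zero_add]
    have hnn : 0 ≤ negMulLog t := negMulLog_nonneg ht.le (by linarith)
    linarith
  have hb : (0:ℝ) < x + t := by linarith
  have k1 : x * (Real.log (x + t) - Real.log x) ≤ (x + t) - x := x_log_ratio hx0 hb
  rw [mul_sub] at k1
  have k2 : t * Real.log (x + t) ≤ 0 :=
    mul_nonpos_of_nonneg_of_nonpos ht.le (Real.log_nonpos hb.le hxt)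
  simp only [negMulLog]
  nlinarith [k1, k2, hηt]

lemma eta_abs {x y : ℝ} (hx : 0 ≤ x) (hx1 : x ≤ 1) (hy : 0 ≤ y) (hy1 : y ≤ 1)
    (hd : |x - y| ≤ 1 / Real.exp 1) :
    |negMulLog x - negMulLog y| ≤ negMulLog |x - y| := by
  rcases eq_or_ne x y with h | hne
  · simp [h]
  wlog hxy : x < y generalizing x y
  · push_neg at hxy
    rw [abs_sub_comm, abs_sub_comm x y]
    exact this hy hy1 hx hx1 (by rwa [abs_sub_comm]) (Ne.symm hne)
      (lt_of_le_of_ne hxy (Ne.symm hne))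
  set t := y - x with htdef
  have ht0 : 0 < t := by simp [htdef]; linarith
  have habs : |x - y| = t := by rw [abs_sub_comm, abs_of_pos ht0]
  rw [habs]
  have hyx : y = x + t := by rw [htdef]; ring
  rw [abs_le]
  constructor
  · have := eta_S1 hx ht0.le
    rw [← hyx] at this
    linarith
  · have := eta_S2 hx ht0 (by rw [← hyx]; exact hy1) (by rwa [habs] at hd)
    rw [← hyx] at this
    linarith

lemma eta_mono {s κ : ℝ} (hs : 0 ≤ s) (hsκ : s ≤ κ) (hκ0 : 0 < κ)
    (hκe : κ ≤ 1 / Real.exp 1) : negMulLog s ≤ negMulLog κ := by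
  rcases eq_or_lt_of_le hs with h | hs0
  · rw [← h, negMulLog_zero]
    exact negMulLog_nonneg hκ0.le (le_trans hκe inv_e_le_one)
  have k1 : s * (Real.log κ - Real.log s) ≤ κ - s := x_log_ratio hs0 hκ0
  rw [mul_sub] at k1
  have k2 : Real.log κ ≤ -1 := log_le_neg_one hκ0 hκe
  have k3 : (κ - s) * Real.log κ ≤ (κ - s) * (-1) :=
    mul_le_mul_of_nonneg_left k2 (by linarith)
  simp only [negMulLog]
  nlinarith [k1, k2, k3]

lemma eta_sum_bound {n : ℕ} (hn : 1 ≤ n) (ε : Fin n → ℝ) (hε : ∀ i, 0 ≤ ε i)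
    {κ : ℝ} (hκ0 : 0 < κ) (hκe : κ ≤ 1 / Real.exp 1) (hs : ∑ i, ε i ≤ κ) :
    ∑ i, negMulLog (ε i) ≤ κ * Real.log (n / κ) := by
  set s := ∑ i, ε i with hsdef
  have hs0 : 0 ≤ s := Finset.sum_nonneg fun i _ => hε i
  have hlogn : 0 ≤ Real.log n := Real.log_nonneg (by exact_mod_cast hn)
  have hn0 : (0:ℝ) < n := by exact_mod_cast hn
  -- Step A : ∑ η(ε i) ≤ s log n + η s
  have stepA : ∑ i, negMulLog (ε i) ≤ s * Real.log n + negMulLog s := by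
    rcases eq_or_lt_of_le hs0 with h | hspos
    · have hall : ∀ i ∈ Finset.univ, ε i = 0 :=
        (Finset.sum_eq_zero_iff_of_nonneg fun i _ => hε i).mp (by rw [← hsdef, ← h])
      have : ∑ i, negMulLog (ε i) = 0 := by
        apply Finset.sum_eq_zero
        intro i hi
        rw [hall i hi, negMulLog_zero]
      rw [this, ← h, negMulLog_zero]
      simp
    have hterm : ∀ i, negMulLog (ε i)
        ≤ ε i * Real.log n + s / n - ε i - ε i * Real.log s := by
      intro i
      rcases eq_or_lt_of_le (hε i) with h | hεpos
      · rw [← h, negMulLog_zero]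
        have : 0 ≤ s / n := by positivity
        simp only [zero_mul, mul_comm]
        linarith [this]
      · have hlog : Real.log (s / (n * ε i)) ≤ s / (n * ε i) - 1 :=
          Real.log_le_sub_one_of_pos (by positivity)
        have hsplit : Real.log (s / (n * ε i)) = Real.log s - Real.log n - Real.log (ε i) := by
          rw [Real.log_div hspos.ne' (by positivity), Real.log_mul hn0.ne' hεpos.ne']
          ring
        rw [hsplit] at hlog
        have := mul_le_mul_of_nonneg_left hlog (hε i)
        have hei : ε i * (s / (n * ε i) - 1) = s / n - ε i := by
          field_simp
        rw [hei] at this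
        simp only [negMulLog]
        nlinarith [this]
    calc ∑ i, negMulLog (ε i)
        ≤ ∑ i, (ε i * Real.log n + s / n - ε i - ε i * Real.log s) :=
          Finset.sum_le_sum fun i _ => hterm i
      _ = s * Real.log n + s - s - s * Real.log s := by
          rw [Finset.sum_sub_distrib, Finset.sum_sub_distrib, Finset.sum_add_distrib,
            ← Finset.sum_mul, ← Finset.sum_mul, ← hsdef]
          congr 2
          have hns : (n:ℝ) * (s / n) = s := by
            rw [mul_div_assoc']; exact mul_div_cancel_left₀ s hn0.ne'
          rw [Finset.sum_const, Finset.card_univ, Fintype.card_fin, nsmul_eq_mul, hns]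
      _ = s * Real.log n + negMulLog s := by simp only [negMulLog]; ring
  -- Step B
  have stepB : s * Real.log n + negMulLog s ≤ κ * Real.log n + negMulLog κ := by
    have := eta_mono hs0 hs hκ0 hκe
    have h1 : s * Real.log n ≤ κ * Real.log n := mul_le_mul_of_nonneg_right hs hlogn
    linarith
  -- Step C
  have stepC : κ * Real.log n + negMulLog κ = κ * Real.log (n / κ) := by
    rw [Real.log_div hn0.ne' hκ0.ne']
    simp only [negMulLog]
    ring
  linarith
end Scalar

section Fannes

lemma vnEntropy_eq (hA : A.IsHermitian) :
    vnEntropy A = ∑ i, Real.negMulLog (hA.eigenvalues i) := by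
  unfold vnEntropy
  rw [dif_pos hA, ← Finset.sum_neg_distrib]
  congr 1
  funext i
  rw [Real.negMulLog]
  ring

lemma vnEntropy_eq_sorted (hA : A.IsHermitian) :
    vnEntropy A = ∑ i, Real.negMulLog (sortEig hA i) := by
  rw [vnEntropy_eq hA, sortEig]
  exact (Equiv.sum_comp (Tuple.sort hA.eigenvalues) (fun x => Real.negMulLog (hA.eigenvalues x))).symm

/-- Fannes' inequality for subnormalized states -/
lemma fannes {A B : Matrix (Fin N) (Fin N) ℂ} (hA : A.PosSemidef) (hB : B.PosSemidef)
    (htA : A.trace.re ≤ 1) (htB : B.trace.re ≤ 1) {κ : ℝ}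
    (hκ0 : 0 < κ) (hκe : κ ≤ 1 / Real.exp 1) (hN : 1 ≤ N)
    (hd : traceNorm (A - B) ≤ κ) :
    |vnEntropy A - vnEntropy B| ≤ κ * Real.log (N / κ) := by
  set x := sortEig hA.isHermitian with hxdef
  set y := sortEig hB.isHermitian with hydef
  have hx0 : ∀ i, 0 ≤ x i := fun i => hA.eigenvalues_nonneg _
  have hy0 : ∀ i, 0 ≤ y i := fun i => hB.eigenvalues_nonneg _
  have hxsum : ∑ i, x i = A.trace.re := sum_sortEig hA.isHermitian
  have hysum : ∑ i, y i = B.trace.re := sum_sortEig hB.isHermitian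
  have hx1 : ∀ i, x i ≤ 1 := by
    intro i
    have := Finset.single_le_sum (f := x) (fun j _ => hx0 j) (Finset.mem_univ i)
    rw [hxsum] at this
    linarith
  have hy1 : ∀ i, y i ≤ 1 := by
    intro i
    have := Finset.single_le_sum (f := y) (fun j _ => hy0 j) (Finset.mem_univ i)
    rw [hysum] at this
    linarith
  have hsum : ∑ i, |x i - y i| ≤ κ :=
    le_trans (sum_abs_sortEig_sub_le hA.isHermitian hB.isHermitian) hd
  have hper : ∀ i, |x i - y i| ≤ 1 / Real.exp 1 := by
    intro i
    have := Finset.single_le_sum (f := fun i => |x i - y i|)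
      (fun j _ => abs_nonneg _) (Finset.mem_univ i)
    linarith
  rw [vnEntropy_eq_sorted hA.isHermitian, vnEntropy_eq_sorted hB.isHermitian]
  rw [← hxdef, ← hydef, ← Finset.sum_sub_distrib]
  calc |∑ i, (Real.negMulLog (x i) - Real.negMulLog (y i))|
      ≤ ∑ i, |Real.negMulLog (x i) - Real.negMulLog (y i)| :=
        Finset.abs_sum_le_sum_abs _ _
    _ ≤ ∑ i, Real.negMulLog (|x i - y i|) :=
        Finset.sum_le_sum fun i _ =>
          eta_abs (hx0 i) (hx1 i) (hy0 i) (hy1 i) (hper i)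
    _ ≤ κ * Real.log (N / κ) :=
        eta_sum_bound hN (fun i => |x i - y i|) (fun i => abs_nonneg _) hκ0 hκe hsum

end Fannes
end FA

/-- Continuity of the objective function `f(ρ) = H(Z(G(ρ))) − H(G(ρ))`
where `G` is CPTNI and `Z` is a pinching channel: if `ρ, σ` are density matrices
with `‖ρ − σ‖₁ ≤ κ ≤ 1/e`, then `|f(ρ) − f(σ)| ≤ 2 κ log(d'/κ)`. -/
theorem objective_continuity_in_state
    {d d' m p : ℕ}
    (K : Fin m → Matrix (Fin d') (Fin d) ℂ)
    (hK : ((1 : Matrix (Fin d) (Fin d) ℂ) - ∑ i, (K i)ᴴ * K i).PosSemidef)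
    (G : Matrix (Fin d) (Fin d) ℂ → Matrix (Fin d') (Fin d') ℂ)
    (hG : G = fun X => ∑ i, K i * X * (K i)ᴴ)
    (P : Fin p → Matrix (Fin d') (Fin d') ℂ)
    (hP1 : ∀ j, (P j)ᴴ = P j) (hP2 : ∀ j, P j * P j = P j)
    (hP3 : ∀ j k, j ≠ k → P j * P k = 0)
    (hP4 : ∑ j, P j = 1)
    (Z : Matrix (Fin d') (Fin d') ℂ → Matrix (Fin d') (Fin d') ℂ)
    (hZ : Z = fun X => ∑ j, P j * X * P j)
    (f : Matrix (Fin d) (Fin d) ℂ → ℝ)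
    (hf : f = fun X => vnEntropy (Z (G X)) - vnEntropy (G X))
    (ρ σ : Matrix (Fin d) (Fin d) ℂ)
    (hρ : ρ.PosSemidef) (hρ1 : ρ.trace = 1)
    (hσ : σ.PosSemidef) (hσ1 : σ.trace = 1)
    (κ : ℝ) (hκ0 : 0 < κ) (hκe : κ ≤ 1 / Real.exp 1)
    (hdist : traceNorm (ρ - σ) ≤ κ) :
    |f ρ - f σ| ≤ 2 * κ * Real.log (d' / κ) := by
  subst hG hZ hf
  simp only []
  by_cases hd' : d' = 0
  · subst hd'
    have hvz : ∀ M : Matrix (Fin 0) (Fin 0) ℂ, vnEntropy M = 0 := by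
      intro M
      unfold vnEntropy
      split <;> simp
    simp only [hvz]
    simp
  · have hN : 1 ≤ d' := Nat.one_le_iff_ne_zero.mpr hd'
    -- rewrite Z as a Kraus map
    have hZform : ∀ X : Matrix (Fin d') (Fin d') ℂ, (∑ j, P j * X * P j)
        = ∑ j, P j * X * (P j)ᴴ :=
      fun X => Finset.sum_congr rfl fun j _ => by rw [hP1 j]
    have hKZ : ((1 : Matrix (Fin d') (Fin d') ℂ) - ∑ j, (P j)ᴴ * P j).PosSemidef := by
      have : ∑ j, (P j)ᴴ * P j = 1 := by
        rw [← hP4]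
        exact Finset.sum_congr rfl fun j _ => by rw [hP1 j, hP2 j]
      rw [this, sub_self]
      exact Matrix.PosSemidef.zero
    have hΔ : (ρ - σ).IsHermitian := hρ.isHermitian.sub hσ.isHermitian
    -- G level facts
    have hGρpsd := FA.kraus_psd K hρ
    have hGσpsd := FA.kraus_psd K hσ
    have hGρtr : (∑ i, K i * ρ * (K i)ᴴ).trace.re ≤ 1 := by
      have := FA.kraus_trace_le K hK hρ
      rw [hρ1] at this
      simpa using this
    have hGσtr : (∑ i, K i * σ * (K i)ᴴ).trace.re ≤ 1 := by
      have := FA.kraus_trace_le K hK hσ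
      rw [hσ1] at this
      simpa using this
    have hGdiff : traceNorm ((∑ i, K i * ρ * (K i)ᴴ) - ∑ i, K i * σ * (K i)ᴴ) ≤ κ := by
      rw [← FA.kraus_sub K ρ σ]
      exact le_trans (FA.kraus_traceNorm_le K hK hΔ) hdist
    have hGΔherm : ((∑ i, K i * ρ * (K i)ᴴ) - ∑ i, K i * σ * (K i)ᴴ).IsHermitian :=
      (FA.kraus_herm K hρ.isHermitian).sub (FA.kraus_herm K hσ.isHermitian)
    -- Z level facts
    rw [hZform, hZform]
    have hZGρpsd := FA.kraus_psd P hGρpsd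
    have hZGσpsd := FA.kraus_psd P hGσpsd
    have hZGρtr : (∑ j, P j * (∑ i, K i * ρ * (K i)ᴴ) * (P j)ᴴ).trace.re ≤ 1 :=
      le_trans (FA.kraus_trace_le P hKZ hGρpsd) hGρtr
    have hZGσtr : (∑ j, P j * (∑ i, K i * σ * (K i)ᴴ) * (P j)ᴴ).trace.re ≤ 1 :=
      le_trans (FA.kraus_trace_le P hKZ hGσpsd) hGσtr
    have hZdiff : traceNorm ((∑ j, P j * (∑ i, K i * ρ * (K i)ᴴ) * (P j)ᴴ)
        - ∑ j, P j * (∑ i, K i * σ * (K i)ᴴ) * (P j)ᴴ) ≤ κ := by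
      rw [← FA.kraus_sub P]
      exact le_trans (FA.kraus_traceNorm_le P hKZ hGΔherm) hGdiff
    have h1 := FA.fannes hZGρpsd hZGσpsd hZGρtr hZGσtr hκ0 hκe hN hZdiff
    have h2 := FA.fannes hGρpsd hGσpsd hGρtr hGσtr hκ0 hκe hN hGdiff
    have key : ∀ a b c d : ℝ, |a - b - (c - d)| ≤ |a - c| + |b - d| := by
      intro a b c d
      have h : a - b - (c - d) = (a - c) + (-(b - d)) := by ring
      rw [h]
      refine le_trans (abs_add_le _ _) (le_of_eq ?_)
      rw [abs_neg]
    have habs := key (vnEntropy (∑ j, P j * (∑ i, K i * ρ * (K i)ᴴ) * (P j)ᴴ))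
      (vnEntropy (∑ i, K i * ρ * (K i)ᴴ))
      (vnEntropy (∑ j, P j * (∑ i, K i * σ * (K i)ᴴ) * (P j)ᴴ))
      (vnEntropy (∑ i, K i * σ * (K i)ᴴ))
    linarith
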